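/- Let α₁, …, α_d ∈ ℂ(x)* with d ≥ 2 be such that no quotient α_i/α_j (i ≠ j) is constant, and let f₁, …, f_d ∈ ℂ(x)*. Suppose S is a finite set of places of ℂ(x) containing all zeros and poles of all α_i and f_i. Then there exists an effectively computable constant C such that if G_n := f₁α₁^n + ⋯ + f_dα_d^n is an S-unit (nonzero with all zeros and poles in S), then n ≤ C. -/

import Mathlib

open Polynomial

/-- The places of ℂ(x): `some c` is the finite place at `c`, `none` is the place at infinity. -/
noncomputable def nu (v : Option ℂ) (f : RatFunc ℂ) : ℤ :=
  match v with
  | some c => (f.num.rootMultiplicity c : ℤ) - (f.denom.rootMultiplicity c : ℤ)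
  | none => (f.denom.natDegree : ℤ) - (f.num.natDegree : ℤ)

/-- The height of a rational function: `H f = -∑_ν min (0, ν f)`. -/
noncomputable def H (f : RatFunc ℂ) : ℤ := -∑ᶠ v : Option ℂ, min 0 (nu v f)

namespace SUaux

abbrev K := RatFunc ℂ
noncomputable abbrev am : ℂ[X] →+* K := algebraMap ℂ[X] K

/-- polynomial valuation -/
noncomputable def nuu (v : Option ℂ) (p : ℂ[X]) : ℤ :=
  match v with
  | some c => (p.rootMultiplicity c : ℤ)
  | none => -(p.natDegree : ℤ)

lemma nu_eq_nuu (v : Option ℂ) (f : K) : nu v f = nuu v f.num - nuu v f.denom := by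
  cases v <;> simp [nu, nuu] <;> ring

lemma nuu_mul (v : Option ℂ) {p q : ℂ[X]} (hp : p ≠ 0) (hq : q ≠ 0) :
    nuu v (p * q) = nuu v p + nuu v q := by
  cases v with
  | some c => simp [nuu, Polynomial.rootMultiplicity_mul (mul_ne_zero hp hq)]
  | none => simp [nuu, Polynomial.natDegree_mul hp hq]; ring

lemma crossmul {p q : ℂ[X]} (hq : q ≠ 0) :
    (am p / am q : K).num * q = p * (am p / am q : K).denom := by
  set f : K := am p / am q with hf
  have h1 : am f.num / am f.denom = am p / am q := by rw [RatFunc.num_div_denom]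
  have h2 : am f.num * am q = am p * am f.denom :=
    (div_eq_div_iff (RatFunc.algebraMap_ne_zero f.denom_ne_zero)
      (RatFunc.algebraMap_ne_zero hq)).mp h1
  apply RatFunc.algebraMap_injective ℂ
  rw [map_mul, map_mul]; exact h2

lemma nu_div (v : Option ℂ) {p q : ℂ[X]} (hp : p ≠ 0) (hq : q ≠ 0) :
    nu v (am p / am q : K) = nuu v p - nuu v q := by
  set f : K := am p / am q with hf
  have hf0 : f ≠ 0 := div_ne_zero (RatFunc.algebraMap_ne_zero hp) (RatFunc.algebraMap_ne_zero hq)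
  have h2 := crossmul (p := p) hq
  have h3 : nuu v (f.num * q) = nuu v (p * f.denom) := by rw [h2]
  rw [nuu_mul v (RatFunc.num_ne_zero hf0) hq, nuu_mul v hp f.denom_ne_zero] at h3
  rw [nu_eq_nuu]; omega

lemma nu_zero (v : Option ℂ) : nu v (0 : K) = 0 := by
  cases v <;> simp [nu]

lemma nuu_C (v : Option ℂ) {c : ℂ} (hc : c ≠ 0) : nuu v (Polynomial.C c) = 0 := by
  cases v with
  | some a =>
    simp [nuu, Polynomial.rootMultiplicity_eq_zero
      (show ¬(Polynomial.C c).IsRoot a from fun h => hc (by simpa using h))]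
  | none => simp [nuu]

lemma nu_mul (v : Option ℂ) {f g : K} (hf : f ≠ 0) (hg : g ≠ 0) :
    nu v (f * g) = nu v f + nu v g := by
  conv_lhs => rw [← RatFunc.num_div_denom f, ← RatFunc.num_div_denom g, div_mul_div_comm,
    ← map_mul, ← map_mul]
  rw [nu_div v (mul_ne_zero (RatFunc.num_ne_zero hf) (RatFunc.num_ne_zero hg))
      (mul_ne_zero f.denom_ne_zero g.denom_ne_zero),
    nuu_mul v (RatFunc.num_ne_zero hf) (RatFunc.num_ne_zero hg),
    nuu_mul v f.denom_ne_zero g.denom_ne_zero, nu_eq_nuu, nu_eq_nuu]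
  ring

lemma nu_inv (v : Option ℂ) (f : K) : nu v f⁻¹ = -nu v f := by
  by_cases hf : f = 0
  · simp [hf, nu_zero]
  · conv_lhs => rw [← RatFunc.num_div_denom f, inv_div]
    rw [nu_div v f.denom_ne_zero (RatFunc.num_ne_zero hf), nu_eq_nuu]
    ring

lemma nu_pow (v : Option ℂ) {f : K} (hf : f ≠ 0) (n : ℕ) :
    nu v (f ^ n) = n * nu v f := by
  induction n with
  | zero => simp [pow_zero]; cases v <;> simp [nu]
  | succ m ih =>
    rw [pow_succ, nu_mul v (pow_ne_zero m hf) hf, ih]; push_cast; ring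

lemma nu_C (v : Option ℂ) (c : ℂ) : nu v (RatFunc.C c : K) = 0 := by
  by_cases hc : c = 0
  · simp [hc, nu_zero]
  · rw [← RatFunc.algebraMap_C, show (am (Polynomial.C c) : K) = am (Polynomial.C c) / am 1 by
      simp, nu_div v (by simpa using hc) one_ne_zero, nuu_C v hc]
    cases v <;> simp [nuu]

lemma nu_neg (v : Option ℂ) (f : K) : nu v (-f) = nu v f := by
  by_cases hf : f = 0
  · simp [hf]
  · rw [show -f = RatFunc.C (-1) * f by rw [map_neg, map_one]; ring,
      nu_mul v (by rw [map_neg, map_one]; simp) hf, nu_C]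
    ring

lemma nuu_add_min (v : Option ℂ) {p q : ℂ[X]} (h : p + q ≠ 0) :
    min (nuu v p) (nuu v q) ≤ nuu v (p + q) := by
  cases v with
  | some c =>
    have := Polynomial.rootMultiplicity_add (p := p) (q := q) c h
    simp only [nuu]; omega
  | none =>
    have := Polynomial.natDegree_add_le p q
    simp only [nuu]; omega

lemma nu_add_min (v : Option ℂ) {f g : K} (hf : f ≠ 0) (hg : g ≠ 0) (hfg : f + g ≠ 0) :
    min (nu v f) (nu v g) ≤ nu v (f + g) := by
  have hdf := f.denom_ne_zero; have hdg := g.denom_ne_zero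
  have hnf := RatFunc.num_ne_zero hf; have hng := RatFunc.num_ne_zero hg
  have key : f + g = am (f.num * g.denom + f.denom * g.num) / am (f.denom * g.denom) := by
    conv_lhs => rw [← RatFunc.num_div_denom f, ← RatFunc.num_div_denom g]
    rw [div_add_div _ _ (RatFunc.algebraMap_ne_zero hdf) (RatFunc.algebraMap_ne_zero hdg),
      map_add, map_mul, map_mul, map_mul]
  have hN : f.num * g.denom + f.denom * g.num ≠ 0 := by
    intro h0
    rw [key, h0, map_zero, zero_div] at hfg; exact hfg rfl
  rw [key, nu_div v hN (mul_ne_zero hdf hdg), nuu_mul v hdf hdg]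
  have h1 := nuu_add_min v (p := f.num * g.denom) (q := f.denom * g.num) hN
  rw [nuu_mul v hnf hdg, nuu_mul v hdf hng] at h1
  rw [nu_eq_nuu, nu_eq_nuu]
  omega

/-- A finite set containing the support of `nu · f`. -/
noncomputable def supp (f : K) : Finset (Option ℂ) :=
  insert none ((f.num.roots.toFinset ∪ f.denom.roots.toFinset).image some)

lemma rm_zero_of_not_mem {c : ℂ} {p : ℂ[X]} (h : c ∉ p.roots.toFinset) :
    p.rootMultiplicity c = 0 := by
  by_cases hp : p = 0
  · simp [hp]
  · exact Polynomial.rootMultiplicity_eq_zero fun hr =>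
      h (Multiset.mem_toFinset.mpr ((Polynomial.mem_roots'.mpr ⟨hp, hr⟩)))

lemma nu_zero_of_not_mem_supp {v : Option ℂ} {f : K} (h : v ∉ supp f) : nu v f = 0 := by
  classical
  cases v with
  | none => exact absurd (show (none : Option ℂ) ∈ supp f from Finset.mem_insert_self _ _) h
  | some c =>
    simp only [supp, Finset.mem_insert, Finset.mem_image, Finset.mem_union] at h
    push_neg at h
    have h1 : c ∉ f.num.roots.toFinset ∧ c ∉ f.denom.roots.toFinset := by
      by_contra hc
      rcases not_and_or.mp hc with hc | hc <;> push_neg at hc <;>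
        [exact (h.2 c (Or.inl hc) rfl); exact (h.2 c (Or.inr hc) rfl)]
    simp [nu, rm_zero_of_not_mem h1.1, rm_zero_of_not_mem h1.2]

lemma nu_support_subset (f : K) : Function.support (fun v => nu v f) ⊆ ↑(supp f) := by
  intro v hv
  simp only [Function.mem_support] at hv
  by_contra hvs
  exact hv (nu_zero_of_not_mem_supp fun hm => hvs (Finset.mem_coe.mpr hm))

lemma sum_mult {p : ℂ[X]} (hp : p ≠ 0) {T : Finset ℂ} (hT : p.roots.toFinset ⊆ T) :
    ∑ c ∈ T, (p.rootMultiplicity c : ℤ) = p.natDegree := by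
  classical
  rw [← Finset.sum_subset hT (by intro c _ hc; simp [rm_zero_of_not_mem hc])]
  have h1 : ∑ c ∈ p.roots.toFinset, p.rootMultiplicity c = p.roots.card := by
    conv_rhs => rw [← Multiset.toFinset_sum_count_eq]
    exact Finset.sum_congr rfl fun c _ => by rw [Polynomial.count_roots]
  have h2 : p.roots.card = p.natDegree :=
    (Polynomial.splits_iff_card_roots).mp (IsAlgClosed.splits p)
  norm_cast
  exact h1.trans h2

lemma nu_finsum {f : K} (hf : f ≠ 0) : ∑ᶠ v, nu v f = 0 := by
  classical
  rw [finsum_eq_sum_of_support_subset _ (nu_support_subset f)]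
  have hnone : (none : Option ℂ) ∉ (f.num.roots.toFinset ∪ f.denom.roots.toFinset).image some := by
    simp
  rw [supp, Finset.sum_insert hnone, Finset.sum_image (by simp)]
  set T := f.num.roots.toFinset ∪ f.denom.roots.toFinset with hT
  rw [show ∑ c ∈ T, nu (some c) f = ∑ c ∈ T,
      ((f.num.rootMultiplicity c : ℤ) - (f.denom.rootMultiplicity c : ℤ)) from
      Finset.sum_congr rfl fun c _ => rfl, Finset.sum_sub_distrib, sum_mult (RatFunc.num_ne_zero hf) Finset.subset_union_left,
    sum_mult f.denom_ne_zero Finset.subset_union_right]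
  simp [nu]

/-- Derivative on `RatFunc ℂ`. -/
noncomputable def Dr (f : K) : K :=
  (am f.num.derivative * am f.denom - am f.num * am f.denom.derivative) / (am f.denom) ^ 2

lemma Dr_div (p : ℂ[X]) {q : ℂ[X]} (hq : q ≠ 0) :
    Dr (am p / am q : K) = (am p.derivative * am q - am p * am q.derivative) / (am q) ^ 2 := by
  set f : K := am p / am q with hf
  have hA : f.num * q = p * f.denom := crossmul hq
  have hB : f.num.derivative * q + f.num * q.derivative
      = p.derivative * f.denom + p * f.denom.derivative := by
    have := congrArg Polynomial.derivative hA
    simpa [Polynomial.derivative_mul] using this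
  have hd := f.denom_ne_zero
  rw [show Dr f = (am f.num.derivative * am f.denom - am f.num * am f.denom.derivative)
      / (am f.denom) ^ 2 from rfl,
    div_eq_div_iff (pow_ne_zero 2 (RatFunc.algebraMap_ne_zero hd))
      (pow_ne_zero 2 (RatFunc.algebraMap_ne_zero hq))]
  simp only [← map_pow, ← map_mul, ← map_sub]
  apply congrArg am
  linear_combination (q * f.denom) * hB - (f.denom.derivative * q + q.derivative * f.denom) * hA

lemma Dr_zero : Dr (0 : K) = 0 := by
  simp [Dr]

lemma Dr_algebraMap (p : ℂ[X]) : Dr (am p : K) = am p.derivative := by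
  have := Dr_div p (q := 1) one_ne_zero
  simpa using this

lemma Dr_one : Dr (1 : K) = 0 := by
  rw [← map_one am, Dr_algebraMap]
  simp

lemma Dr_C (c : ℂ) : Dr (RatFunc.C c : K) = 0 := by
  rw [← RatFunc.algebraMap_C, Dr_algebraMap]
  simp

lemma Dr_natCast (n : ℕ) : Dr ((n : K)) = 0 := by
  rw [show ((n : K)) = am ((n : ℂ[X])) from (map_natCast am n).symm, Dr_algebraMap,
    Polynomial.derivative_natCast]
  simp

lemma Dr_add' {b d : ℂ[X]} (a c : ℂ[X]) (hb : b ≠ 0) (hd : d ≠ 0) :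
    Dr (am a / am b + am c / am d : K) = Dr (am a / am b : K) + Dr (am c / am d : K) := by
  have h1 : (am b : K) ≠ 0 := RatFunc.algebraMap_ne_zero hb
  have h2 : (am d : K) ≠ 0 := RatFunc.algebraMap_ne_zero hd
  rw [div_add_div _ _ h1 h2, ← map_mul, ← map_mul, ← map_mul, ← map_add,
    Dr_div _ (mul_ne_zero hb hd), Dr_div _ hb, Dr_div _ hd]
  simp only [Polynomial.derivative_add, Polynomial.derivative_mul, map_add, map_mul]
  rw [div_add_div _ _ (pow_ne_zero 2 h1) (pow_ne_zero 2 h2), div_eq_div_iff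
    (pow_ne_zero 2 (mul_ne_zero h1 h2)) (mul_ne_zero (pow_ne_zero 2 h1) (pow_ne_zero 2 h2))]
  ring

lemma Dr_mul' {b d : ℂ[X]} (a c : ℂ[X]) (hb : b ≠ 0) (hd : d ≠ 0) :
    Dr (am a / am b * (am c / am d) : K)
      = Dr (am a / am b : K) * (am c / am d) + (am a / am b) * Dr (am c / am d : K) := by
  have h1 : (am b : K) ≠ 0 := RatFunc.algebraMap_ne_zero hb
  have h2 : (am d : K) ≠ 0 := RatFunc.algebraMap_ne_zero hd
  rw [div_mul_div_comm, ← map_mul, ← map_mul, Dr_div _ (mul_ne_zero hb hd),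
    Dr_div _ hb, Dr_div _ hd]
  simp only [Polynomial.derivative_mul, map_add, map_mul]
  rw [div_mul_div_comm, div_mul_div_comm, div_add_div _ _ (mul_ne_zero (pow_ne_zero 2 h1) h2)
      (mul_ne_zero h1 (pow_ne_zero 2 h2)),
    div_eq_div_iff (pow_ne_zero 2 (mul_ne_zero h1 h2))
      (mul_ne_zero (mul_ne_zero (pow_ne_zero 2 h1) h2) (mul_ne_zero h1 (pow_ne_zero 2 h2)))]
  ring

lemma Dr_add (f g : K) : Dr (f + g) = Dr f + Dr g := by
  rw [← RatFunc.num_div_denom f, ← RatFunc.num_div_denom g]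
  exact Dr_add' _ _ f.denom_ne_zero g.denom_ne_zero

lemma Dr_mul (f g : K) : Dr (f * g) = Dr f * g + f * Dr g := by
  rw [← RatFunc.num_div_denom f, ← RatFunc.num_div_denom g]
  exact Dr_mul' _ _ f.denom_ne_zero g.denom_ne_zero

lemma Dr_sum {ι : Type*} (s : Finset ι) (g : ι → K) :
    Dr (∑ i ∈ s, g i) = ∑ i ∈ s, Dr (g i) := by
  classical
  induction s using Finset.induction with
  | empty => simp [Dr_zero]
  | insert _ _ h ih => rw [Finset.sum_insert h, Finset.sum_insert h, Dr_add, ih]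

lemma Dr_pow_mul (α : K) (n : ℕ) : Dr (α ^ n) * α = n * α ^ n * Dr α := by
  induction n with
  | zero => simp [Dr_one]
  | succ m ih =>
    rw [pow_succ, Dr_mul]
    push_cast
    calc (Dr (α ^ m) * α + α ^ m * Dr α) * α
        = (Dr (α ^ m) * α) * α + α ^ m * Dr α * α := by ring
      _ = (m * α ^ m * Dr α) * α + α ^ m * Dr α * α := by rw [ih]
      _ = (↑m + 1) * (α ^ m * α) * Dr α := by ring

lemma Dr_eq_zero_const {f : K} (h : Dr f = 0) : ∃ c : ℂ, f = RatFunc.C c := by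
  by_cases hf : f = 0
  · exact ⟨0, by simp [hf]⟩
  have hd := f.denom_ne_zero
  have hnum := RatFunc.num_ne_zero hf
  -- numerator of Dr f is zero
  have hkey : f.num.derivative * f.denom = f.num * f.denom.derivative := by
    have h0 : (am (f.num.derivative * f.denom - f.num * f.denom.derivative) : K) = 0 := by
      rw [map_sub, map_mul, map_mul]
      have := h
      rw [Dr, div_eq_iff (pow_ne_zero 2 (RatFunc.algebraMap_ne_zero hd))] at this
      rw [this]; ring
    have := RatFunc.algebraMap_injective ℂ (h0.trans (map_zero am).symm)
    exact sub_eq_zero.mp this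
  have hcop : IsCoprime f.num f.denom := RatFunc.isCoprime_num_denom f
  have hdd : f.denom ∣ f.denom.derivative := by
    have h1 : f.denom ∣ f.denom.derivative * f.num :=
      ⟨f.num.derivative, by linear_combination -hkey⟩
    exact hcop.symm.dvd_of_dvd_mul_right h1
  have hdeg0 : f.denom.natDegree = 0 := by
    by_contra hne
    have hd0 : f.denom.derivative ≠ 0 := by
      intro h0
      exact hne (Polynomial.natDegree_eq_zero_of_derivative_eq_zero h0)
    have := Polynomial.natDegree_le_of_dvd hdd hd0
    have := Polynomial.natDegree_derivative_lt hne
    omega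
  have hdenom1 : f.denom = 1 := by
    have := RatFunc.monic_denom f
    exact (Polynomial.Monic.natDegree_eq_zero this).mp hdeg0
  have hn' : f.num.derivative = 0 := by
    have : f.num.derivative * f.denom = 0 := by
      rw [hkey, hdenom1]; simp
    rw [hdenom1] at this; simpa using this
  obtain ⟨a, ha⟩ := Polynomial.natDegree_eq_zero.mp
    (Polynomial.natDegree_eq_zero_of_derivative_eq_zero hn')
  refine ⟨a, ?_⟩
  rw [← RatFunc.num_div_denom f, hdenom1, ← ha]
  simp [RatFunc.algebraMap_C]

/-- weight: finite places lose 1, infinity gains 1 under derivative -/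
def wt : Option ℂ → ℤ := fun v => match v with | some _ => -1 | none => 1

lemma nuu_neg (v : Option ℂ) (p : ℂ[X]) : nuu v (-p) = nuu v p := by
  by_cases hp : p = 0
  · simp [hp]
  · rw [show -p = Polynomial.C (-1) * p by simp, nuu_mul v (by simp) hp,
      nuu_C v (by norm_num)]
    ring

lemma nuu_deriv (v : Option ℂ) {p : ℂ[X]} (hp' : p.derivative ≠ 0) :
    nuu v p + wt v ≤ nuu v p.derivative := by
  have hp : p ≠ 0 := fun h => hp' (by simp [h])
  have hdeg : p.natDegree ≠ 0 := fun h => by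
    obtain ⟨a, ha⟩ := Polynomial.natDegree_eq_zero.mp h
    exact hp' (by rw [← ha]; simp)
  cases v with
  | some c =>
    have := Polynomial.rootMultiplicity_sub_one_le_derivative_rootMultiplicity_of_ne_zero p c hp'
    simp only [nuu, wt]; omega
  | none =>
    have h1 := Polynomial.natDegree_derivative_le p
    have h2 := Polynomial.natDegree_derivative_lt hdeg
    simp only [nuu, wt]; omega

lemma Dr_rep (f : K) :
    Dr f = am (f.num.derivative * f.denom - f.num * f.denom.derivative) / am (f.denom ^ 2) := by
  rw [Dr, map_sub, map_mul, map_mul, map_pow]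

lemma nu_Dr (v : Option ℂ) {f : K} (hf : f ≠ 0) (hDf : Dr f ≠ 0) :
    nu v f + wt v ≤ nu v (Dr f) := by
  set n := f.num with hn; set d := f.denom with hd
  have hn0 : n ≠ 0 := RatFunc.num_ne_zero hf
  have hd0 : d ≠ 0 := f.denom_ne_zero
  set N := n.derivative * d - n * d.derivative with hN
  have hN0 : N ≠ 0 := by
    intro h0
    rw [Dr_rep, ← hn, ← hd, ← hN, h0] at hDf
    simp at hDf
  have hrep : Dr f = am N / am (d ^ 2) := by rw [Dr_rep]
  have hval : nu v (Dr f) = nuu v N - 2 * nuu v d := by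
    rw [hrep, nu_div v hN0 (pow_ne_zero 2 hd0), show d ^ 2 = d * d from sq d,
      nuu_mul v hd0 hd0]
    ring
  have hvf : nu v f = nuu v n - nuu v d := nu_eq_nuu v f
  have key : nuu v n + nuu v d + wt v ≤ nuu v N := by
    by_cases h1 : n.derivative = 0
    · by_cases h2 : d.derivative = 0
      · exact absurd (by rw [hN, h1, h2]; ring) hN0
      · have e : N = -(n * d.derivative) := by rw [hN, h1]; ring
        rw [e, nuu_neg, nuu_mul v hn0 h2]
        have := nuu_deriv v h2
        omega
    · by_cases h2 : d.derivative = 0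
      · have e : N = n.derivative * d := by rw [hN, h2]; ring
        rw [e, nuu_mul v h1 hd0]
        have := nuu_deriv v h1
        omega
      · have hmin := nuu_add_min v (p := n.derivative * d) (q := -(n * d.derivative))
          (by rw [show n.derivative * d + -(n * d.derivative) = N by rw [hN]; ring]; exact hN0)
        rw [show n.derivative * d + -(n * d.derivative) = N by rw [hN]; ring] at hmin
        rw [nuu_mul v h1 hd0, nuu_neg, nuu_mul v hn0 h2] at hmin
        have := nuu_deriv v h1
        have := nuu_deriv v h2
        omega
  omega

lemma coprime_mult (f : K) (c : ℂ) :
    f.num.rootMultiplicity c = 0 ∨ f.denom.rootMultiplicity c = 0 := by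
  by_contra hc
  push_neg at hc
  have h1 : (X - Polynomial.C c) ∣ f.num := by
    have := Polynomial.pow_rootMultiplicity_dvd f.num c
    exact dvd_trans (dvd_pow_self _ hc.1) this
  have h2 : (X - Polynomial.C c) ∣ f.denom := by
    have := Polynomial.pow_rootMultiplicity_dvd f.denom c
    exact dvd_trans (dvd_pow_self _ hc.2) this
  exact Polynomial.not_isUnit_X_sub_C c ((RatFunc.isCoprime_num_denom f).isUnit_of_dvd' h1 h2)

lemma nu_Dr_nonneg (v : Option ℂ) {f : K} (hf : f ≠ 0) (hv : 0 ≤ nu v f) :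
    Dr f = 0 ∨ 0 ≤ nu v (Dr f) := by
  by_cases hDf : Dr f = 0
  · exact Or.inl hDf
  right
  cases v with
  | none =>
    have := nu_Dr none hf hDf
    simp only [wt] at this
    omega
  | some c =>
    have hd0 : f.denom.rootMultiplicity c = 0 := by
      rcases coprime_mult f c with h | h
      · have : nu (some c) f = 0 - (f.denom.rootMultiplicity c : ℤ) := by
          simp [nu, h]
        omega
      · exact h
    set N := f.num.derivative * f.denom - f.num * f.denom.derivative with hN
    have hN0 : N ≠ 0 := by
      intro h0
      rw [Dr_rep, ← hN, h0] at hDf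
      simp at hDf
    have hval : nu (some c) (Dr f) = nuu (some c) N - 2 * nuu (some c) f.denom := by
      rw [Dr_rep, ← hN, nu_div _ hN0 (pow_ne_zero 2 f.denom_ne_zero),
        show f.denom ^ 2 = f.denom * f.denom from sq f.denom,
        nuu_mul _ f.denom_ne_zero f.denom_ne_zero]
      ring
    have : nuu (some c) f.denom = 0 := by simp [nuu, hd0]
    have hNpos : 0 ≤ nuu (some c) N := by simp [nuu]
    omega

lemma nu_iter_lb (m : ℕ) (v : Option ℂ) {f : K} (hf : f ≠ 0) :
    Dr^[m] f = 0 ∨ nu v f + m • wt v ≤ nu v (Dr^[m] f) := by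
  induction m with
  | zero => right; simp
  | succ k ih =>
    rcases ih with h | h
    · left; rw [Function.iterate_succ_apply', h, Dr_zero]
    · by_cases h2 : Dr^[k] f = 0
      · left; rw [Function.iterate_succ_apply', h2, Dr_zero]
      by_cases h3 : Dr (Dr^[k] f) = 0
      · left; rw [Function.iterate_succ_apply', h3]
      right
      rw [Function.iterate_succ_apply']
      have := nu_Dr v h2 h3
      have hs : (k + 1) • wt v = k • wt v + wt v := by
        rw [add_smul, one_smul]
      omega

lemma nu_iter_nonneg (m : ℕ) (v : Option ℂ) {f : K} (hf : f ≠ 0) (hv : 0 ≤ nu v f) :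
    Dr^[m] f = 0 ∨ 0 ≤ nu v (Dr^[m] f) := by
  induction m with
  | zero => right; simpa
  | succ k ih =>
    rcases ih with h | h
    · left; rw [Function.iterate_succ_apply', h, Dr_zero]
    · by_cases h2 : Dr^[k] f = 0
      · left; rw [Function.iterate_succ_apply', h2, Dr_zero]
      rw [Function.iterate_succ_apply']
      exact nu_Dr_nonneg v h2 h

lemma min_support_subset (f : K) :
    Function.support (fun v => min 0 (nu v f)) ⊆ ↑(supp f) := by
  intro v hv
  simp only [Function.mem_support] at hv
  by_contra hvs
  exact hv (by rw [nu_zero_of_not_mem_supp fun hm => hvs (Finset.mem_coe.mpr hm)]; simp)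

lemma H_eq_sum {f : K} {T : Finset (Option ℂ)} (hT : supp f ⊆ T) :
    H f = -∑ v ∈ T, min 0 (nu v f) := by
  rw [H, finsum_eq_sum_of_support_subset _
    (subset_trans (min_support_subset f) (Finset.coe_subset.mpr hT))]

lemma H_nonneg (f : K) : 0 ≤ H f := by
  rw [H_eq_sum (le_refl (supp f)), neg_nonneg]
  exact Finset.sum_nonpos fun v _ => min_le_left 0 _

lemma H_mul_le {f g : K} (hf : f ≠ 0) (hg : g ≠ 0) : H (f * g) ≤ H f + H g := by
  classical
  set T := supp f ∪ supp g ∪ supp (f * g) with hT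
  rw [H_eq_sum (T := T) Finset.subset_union_right,
    H_eq_sum (T := T) (Finset.subset_union_left.trans Finset.subset_union_left),
    H_eq_sum (T := T) (Finset.subset_union_right.trans Finset.subset_union_left)]
  rw [← neg_add, neg_le_neg_iff, ← Finset.sum_add_distrib]
  refine Finset.sum_le_sum fun v _ => ?_
  rw [nu_mul v hf hg]
  omega

lemma H_inv {f : K} (hf : f ≠ 0) : H f⁻¹ = H f := by
  classical
  have hfi : f⁻¹ ≠ 0 := inv_ne_zero hf
  set T := supp f ∪ supp f⁻¹ with hT
  have hsum : ∑ v ∈ T, nu v f = 0 := by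
    rw [← nu_finsum hf, finsum_eq_sum_of_support_subset _
      (subset_trans (nu_support_subset f) (Finset.coe_subset.mpr Finset.subset_union_left))]
  rw [H_eq_sum (T := T) Finset.subset_union_right,
    H_eq_sum (T := T) Finset.subset_union_left]
  have : ∀ v ∈ T, min 0 (nu v f⁻¹) = -(nu v f) + min 0 (nu v f) := by
    intro v _
    rw [nu_inv]
    omega
  rw [Finset.sum_congr rfl this, Finset.sum_add_distrib, Finset.sum_neg_distrib, hsum]
  ring

lemma H_pow {f : K} (hf : f ≠ 0) (n : ℕ) : H (f ^ n) = n * H f := by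
  classical
  set T := supp f ∪ supp (f ^ n) with hT
  rw [H_eq_sum (T := T) Finset.subset_union_right,
    H_eq_sum (T := T) Finset.subset_union_left]
  have key : ∀ v ∈ T, min 0 (nu v (f ^ n)) = n * min 0 (nu v f) := by
    intro v _
    rw [nu_pow v hf n]
    rcases le_or_gt 0 (nu v f) with h | h
    · rw [min_eq_left (mul_nonneg (Int.natCast_nonneg n) h), min_eq_left h, mul_zero]
    · have hn : (n : ℤ) * nu v f ≤ 0 := by nlinarith [Int.natCast_nonneg n]
      rw [min_eq_right hn, min_eq_right h.le]
  rw [Finset.sum_congr rfl key, ← Finset.mul_sum]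
  ring

lemma nu_nonneg_all_const {f : K} (hf : f ≠ 0) (h : ∀ v, 0 ≤ nu v f) :
    ∃ c : ℂ, f = RatFunc.C c := by
  have hd0 : f.denom.natDegree = 0 := by
    by_contra hne
    obtain ⟨c, hc⟩ := Complex.exists_root
      (Polynomial.natDegree_pos_iff_degree_pos.mp (Nat.pos_of_ne_zero hne) :
        0 < f.denom.degree)
    have hmult : 0 < f.denom.rootMultiplicity c :=
      (Polynomial.rootMultiplicity_pos f.denom_ne_zero).mpr hc
    have hnum : f.num.rootMultiplicity c = 0 := by
      rcases coprime_mult f c with h1 | h1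
      · exact h1
      · omega
    have := h (some c)
    simp only [nu, hnum] at this
    omega
  have hdenom1 : f.denom = 1 := (Polynomial.Monic.natDegree_eq_zero (RatFunc.monic_denom f)).mp hd0
  have hn0 : f.num.natDegree = 0 := by
    have := h none
    simp only [nu, hdenom1, Polynomial.natDegree_one] at this
    omega
  obtain ⟨a, ha⟩ := Polynomial.natDegree_eq_zero.mp hn0
  refine ⟨a, ?_⟩
  rw [← RatFunc.num_div_denom f, hdenom1, ← ha]
  simp [RatFunc.algebraMap_C]

lemma H_pos_of_nonconst {f : K} (hf : f ≠ 0) (hnc : ∀ c : ℂ, f ≠ RatFunc.C c) :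
    1 ≤ H f := by
  rcases lt_or_ge 0 (H f) with h | h
  · omega
  exfalso
  have h0 : H f = 0 := le_antisymm h (H_nonneg f)
  have hterm : ∀ v ∈ supp f, min 0 (nu v f) = 0 := by
    intro v hv
    rw [H_eq_sum (le_refl (supp f)), neg_eq_zero] at h0
    have := (Finset.sum_eq_zero_iff_of_nonpos fun w _ => min_le_left 0 (nu w f)).mp h0
    exact this v hv
  have hge : ∀ v, 0 ≤ nu v f := by
    intro v
    by_cases hv : v ∈ supp f
    · have := hterm v hv; omega
    · rw [nu_zero_of_not_mem_supp hv]
  obtain ⟨c, hc⟩ := nu_nonneg_all_const hf hge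
  exact hnc c hc

lemma H_le_of_bounds {f : K} (S : Finset (Option ℂ)) (B : ℤ) (hB : 0 ≤ B)
    (h1 : ∀ v ∉ S, 0 ≤ nu v f) (h2 : ∀ v, -B ≤ nu v f) : H f ≤ B * S.card := by
  classical
  set T := supp f ∪ S with hT
  rw [H_eq_sum (T := T) Finset.subset_union_left]
  have key : ∀ v ∈ T, -min 0 (nu v f) ≤ (if v ∈ S then B else 0) := by
    intro v _
    by_cases hv : v ∈ S
    · simp only [hv, if_true]
      have := h2 v
      omega
    · simp only [hv, if_false]
      have := h1 v hv
      omega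
  calc -∑ v ∈ T, min 0 (nu v f) = ∑ v ∈ T, -min 0 (nu v f) := by
        rw [← Finset.sum_neg_distrib]
    _ ≤ ∑ v ∈ T, (if v ∈ S then B else 0) := Finset.sum_le_sum key
    _ = ∑ v ∈ T.filter (· ∈ S), B := by rw [Finset.sum_filter]
    _ = B * (T.filter (· ∈ S)).card := by rw [Finset.sum_const, nsmul_eq_mul, mul_comm]
    _ ≤ B * S.card := by
        have hsub : T.filter (· ∈ S) ⊆ S := fun v hv => (Finset.mem_filter.mp hv).2
        have := Finset.card_le_card hsub
        exact mul_le_mul_of_nonneg_left (by exact_mod_cast this) hB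

lemma nu_prod_lb {ι : Type*} (v : Option ℂ) (s : Finset ι) (x : ι → K) (b : ι → ℤ)
    (h : ∀ i ∈ s, x i = 0 ∨ b i ≤ nu v (x i)) :
    (∏ i ∈ s, x i) = 0 ∨ (∑ i ∈ s, b i) ≤ nu v (∏ i ∈ s, x i) := by
  classical
  induction s using Finset.induction with
  | empty =>
      right
      rw [Finset.prod_empty, Finset.sum_empty]
      cases v <;> simp [nu]
  | @insert a s ha ih =>
    rcases h a (Finset.mem_insert_self a s) with h0 | hb
    · left; rw [Finset.prod_insert ha, h0, zero_mul]
    by_cases hxa : x a = 0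
    · left; rw [Finset.prod_insert ha, hxa, zero_mul]
    by_cases hps : ∏ i ∈ s, x i = 0
    · left; rw [Finset.prod_insert ha, hps, mul_zero]
    rcases ih (fun i hi => h i (Finset.mem_insert_of_mem hi)) with h0 | hp
    · exact absurd h0 hps
    right
    rw [Finset.prod_insert ha, Finset.sum_insert ha, nu_mul v hxa hps]
    exact add_le_add hb hp

lemma nu_sum_lb {ι : Type*} (v : Option ℂ) (s : Finset ι) (x : ι → K) (B : ℤ)
    (h : ∀ i ∈ s, x i = 0 ∨ B ≤ nu v (x i)) :
    (∑ i ∈ s, x i) = 0 ∨ B ≤ nu v (∑ i ∈ s, x i) := by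
  classical
  induction s using Finset.induction with
  | empty => left; simp
  | @insert a s ha ih =>
    rw [Finset.sum_insert ha]
    rcases h a (Finset.mem_insert_self a s) with h0 | hb
    · rcases ih (fun i hi => h i (Finset.mem_insert_of_mem hi)) with hs | hs
      · left; rw [h0, hs, add_zero]
      · rw [h0, zero_add]; right; exact hs
    by_cases hxa : x a = 0
    · rcases ih (fun i hi => h i (Finset.mem_insert_of_mem hi)) with hs | hs
      · left; rw [hxa, hs, add_zero]
      · rw [hxa, zero_add]; right; exact hs
    rcases ih (fun i hi => h i (Finset.mem_insert_of_mem hi)) with hs | hs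
    · rw [hs, add_zero]; right; exact hb
    by_cases hsz : ∑ i ∈ s, x i = 0
    · rw [hsz, add_zero]; right; exact hb
    by_cases hz : x a + ∑ i ∈ s, x i = 0
    · left; exact hz
    right
    have := nu_add_min v hxa hsz hz
    omega

/-- applies `Dr` to the coefficients -/
noncomputable def dmap (p : Polynomial K) : Polynomial K :=
  p.sum fun j a => Polynomial.C (Dr a) * Polynomial.X ^ j

lemma dmap_coeff (p : Polynomial K) (m : ℕ) : (dmap p).coeff m = Dr (p.coeff m) := by
  rw [dmap, Polynomial.sum_def, Polynomial.finset_sum_coeff]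
  simp only [Polynomial.coeff_C_mul, Polynomial.coeff_X_pow, mul_ite, mul_one, mul_zero]
  rw [Finset.sum_ite_eq p.support m (fun k => Dr (p.coeff k))]
  split_ifs with hm
  · rfl
  · rw [Polynomial.notMem_support_iff.mp hm, Dr_zero]

lemma Dr_pow_zero {t : K} (ht : Dr t = 0) (k : ℕ) : Dr (t ^ k) = 0 := by
  induction k with
  | zero => simpa using Dr_one
  | succ m ih => rw [pow_succ, Dr_mul, ih, ht]; ring

lemma dmap_eval {t : K} (ht : Dr t = 0) (p : Polynomial K) :
    Dr (p.eval t) = (dmap p).eval t := by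
  rw [Polynomial.eval_eq_sum, Polynomial.sum_def, Dr_sum, dmap, Polynomial.sum_def,
    Polynomial.eval_finset_sum]
  refine Finset.sum_congr rfl fun j _ => ?_
  rw [Dr_mul, Dr_pow_zero ht, Polynomial.eval_mul, Polynomial.eval_C, Polynomial.eval_pow,
    Polynomial.eval_X]
  ring

lemma dmap_natDegree_le (p : Polynomial K) : (dmap p).natDegree ≤ p.natDegree := by
  refine Polynomial.natDegree_le_iff_coeff_eq_zero.mpr fun j hj => ?_
  rw [dmap_coeff, Polynomial.coeff_eq_zero_of_natDegree_lt hj, Dr_zero]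

/-- polynomial (in `n`) giving the `m`-th derivative of `g·α^n` divided by `α^n`;
`β` is the logarithmic derivative of `α`. -/
noncomputable def cpoly (β g : K) : ℕ → Polynomial K
  | 0 => Polynomial.C g
  | m + 1 => dmap (cpoly β g m) + Polynomial.X * Polynomial.C β * cpoly β g m

lemma cpoly_natDegree_le (β g : K) (m : ℕ) : (cpoly β g m).natDegree ≤ m := by
  induction m with
  | zero => simp [cpoly]
  | succ k ih =>
    rw [cpoly]
    refine le_trans (Polynomial.natDegree_add_le _ _) ?_
    refine max_le (le_trans (dmap_natDegree_le _) (by omega)) ?_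
    refine le_trans (Polynomial.natDegree_mul_le) ?_
    have h1 : (Polynomial.X * Polynomial.C β : Polynomial K).natDegree ≤ 1 :=
      le_trans Polynomial.natDegree_mul_le (by simp)
    omega

lemma cpoly_coeff_top (β g : K) (m : ℕ) : (cpoly β g m).coeff m = g * β ^ m := by
  induction m with
  | zero => simp [cpoly]
  | succ k ih =>
    rw [cpoly, Polynomial.coeff_add, dmap_coeff,
      Polynomial.coeff_eq_zero_of_natDegree_lt (lt_of_le_of_lt (cpoly_natDegree_le β g k)
        (Nat.lt_succ_self k)), Dr_zero, zero_add, mul_assoc, Polynomial.coeff_X_mul,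
      Polynomial.coeff_C_mul, ih]
    ring

lemma cpoly_eval {a : K} (ha : a ≠ 0) (g : K) (n m : ℕ) :
    Dr^[m] (g * a ^ n) = a ^ n * (cpoly (Dr a / a) g m).eval ((n : K)) := by
  induction m with
  | zero => simp [cpoly]; ring
  | succ k ih =>
    rw [Function.iterate_succ_apply', ih, Dr_mul, cpoly, Polynomial.eval_add,
      ← dmap_eval (Dr_natCast n), Polynomial.eval_mul, Polynomial.eval_mul,
      Polynomial.eval_X, Polynomial.eval_C]
    have hpow : Dr (a ^ n) = (n : K) * a ^ n * (Dr a / a) := by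
      have := Dr_pow_mul a n
      field_simp
      linear_combination this
    rw [hpow]
    ring

lemma coeff_mul_of_le {p q : Polynomial K} {a b : ℕ} (hp : p.natDegree ≤ a)
    (hq : q.natDegree ≤ b) : (p * q).coeff (a + b) = p.coeff a * q.coeff b := by
  rw [Polynomial.coeff_mul]
  apply Finset.sum_eq_single (a, b)
  · intro x hx hne
    rw [Finset.HasAntidiagonal.mem_antidiagonal] at hx
    rcases lt_trichotomy x.1 a with h | h | h
    · have hb : b < x.2 := by omega
      rw [Polynomial.coeff_eq_zero_of_natDegree_lt (lt_of_le_of_lt hq hb), mul_zero]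
    · exact absurd (Prod.ext h (by omega)) hne
    · rw [Polynomial.coeff_eq_zero_of_natDegree_lt (lt_of_le_of_lt hp h), zero_mul]
  · intro hmem
    exact absurd (show (a, b) ∈ Finset.HasAntidiagonal.antidiagonal (a + b) from
      Finset.HasAntidiagonal.mem_antidiagonal.mpr rfl) hmem

lemma coeff_prod_sum {ι : Type*} [DecidableEq ι] (s : Finset ι) (p : ι → Polynomial K)
    (nn : ι → ℕ) (h : ∀ i ∈ s, (p i).natDegree ≤ nn i) :
    (∏ i ∈ s, p i).coeff (∑ i ∈ s, nn i) = ∏ i ∈ s, (p i).coeff (nn i) := by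
  induction s using Finset.induction with
  | empty => simp
  | @insert a s ha ih =>
    rw [Finset.prod_insert ha, Finset.sum_insert ha, Finset.prod_insert ha,
      coeff_mul_of_le (h a (Finset.mem_insert_self a s))
        (le_trans (Polynomial.natDegree_prod_le _ _)
          (Finset.sum_le_sum fun i hi => h i (Finset.mem_insert_of_mem hi))),
      ih (fun i hi => h i (Finset.mem_insert_of_mem hi))]

noncomputable def Qdet {d : ℕ} (β g : Fin d → K) : Polynomial K :=
  Matrix.det (Matrix.of fun m k : Fin d => cpoly (β k) (g k) (m : ℕ))

lemma Qdet_coeff {d : ℕ} (β g : Fin d → K) :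
    (Qdet β g).coeff (∑ m : Fin d, (m : ℕ))
      = Matrix.det (Matrix.of fun m k : Fin d => g k * β k ^ (m : ℕ)) := by
  rw [Qdet, Matrix.det_apply, Polynomial.finset_sum_coeff, Matrix.det_apply]
  refine Finset.sum_congr rfl fun σ _ => ?_
  rw [Polynomial.coeff_smul]
  congr 1
  have hsum : ∑ m : Fin d, (m : ℕ) = ∑ i : Fin d, ((σ i : Fin d) : ℕ) :=
    (Equiv.sum_comp σ fun m => (m : ℕ)).symm
  simp only [Matrix.of_apply]
  rw [hsum, coeff_prod_sum _ _ _ (fun i _ => cpoly_natDegree_le _ _ _)]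
  exact Finset.prod_congr rfl fun i _ => cpoly_coeff_top _ _ _

lemma Qdet_ne_zero {d : ℕ} {β g : Fin d → K} (hβ : Function.Injective β)
    (hg : ∀ k, g k ≠ 0) : Qdet β g ≠ 0 := by
  intro h0
  have hc := Qdet_coeff β g
  rw [h0, Polynomial.coeff_zero] at hc
  have h1 : Matrix.det (Matrix.of fun m k : Fin d => g k * β k ^ (m : ℕ))
      = (∏ k, g k) * Matrix.det (Matrix.of fun m k : Fin d => β k ^ (m : ℕ)) :=
    Matrix.det_mul_row g _
  have h2 : Matrix.det (Matrix.of fun m k : Fin d => β k ^ (m : ℕ))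
      = Matrix.det (Matrix.vandermonde β) := by
    rw [show (Matrix.of fun m k : Fin d => β k ^ (m : ℕ))
        = Matrix.transpose (Matrix.vandermonde β) from rfl, Matrix.det_transpose]
  rw [h1, h2, Matrix.det_vandermonde] at hc
  have h3 : (∏ k, g k) ≠ 0 := Finset.prod_ne_zero_iff.mpr fun k _ => hg k
  have h4 : (∏ i : Fin d, ∏ j ∈ Finset.Ioi i, (β j - β i)) ≠ 0 := by
    refine Finset.prod_ne_zero_iff.mpr fun i _ => Finset.prod_ne_zero_iff.mpr fun j hj => ?_
    exact sub_ne_zero_of_ne (fun he => (Finset.mem_Ioi.mp hj).ne' (hβ he))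
  exact (mul_ne_zero h3 h4) hc.symm

lemma Dr_div_eq {a b : K} (hb : b ≠ 0) : Dr (a / b) = (Dr a * b - a * Dr b) / b ^ 2 := by
  have h1 : a = a / b * b := (div_mul_cancel₀ a hb).symm
  have h2 : Dr a = Dr (a / b) * b + a / b * Dr b := by
    conv_lhs => rw [h1]
    rw [Dr_mul]
  have h3 : a / b * b = a := div_mul_cancel₀ a hb
  rw [eq_div_iff (pow_ne_zero 2 hb)]
  linear_combination (-b) * h2 - Dr b * h3

lemma beta_inj {d : ℕ} (α : Fin d → K) (hα : ∀ i, α i ≠ 0)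
    (hnd : ∀ i j, i ≠ j → ∀ c : ℂ, α i / α j ≠ RatFunc.C c) :
    Function.Injective (fun i => Dr (α i) / α i) := by
  intro i j hij
  by_contra hne
  simp only at hij
  have hq : Dr (α i / α j) = 0 := by
    rw [Dr_div_eq (hα j)]
    have hcross : Dr (α i) * α j = α i * Dr (α j) := by
      rw [div_eq_div_iff (hα i) (hα j)] at hij
      linear_combination hij
    rw [hcross]
    simp
  obtain ⟨c, hc⟩ := Dr_eq_zero_const hq
  exact hnd i j hne c hc

lemma Dr_iter_sum {ι : Type*} (m : ℕ) (s : Finset ι) (g : ι → K) :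
    Dr^[m] (∑ i ∈ s, g i) = ∑ i ∈ s, Dr^[m] (g i) := by
  induction m with
  | zero => simp
  | succ k ih => rw [Function.iterate_succ_apply', ih, Dr_sum]
                 exact Finset.sum_congr rfl fun i _ => (Function.iterate_succ_apply' Dr k _).symm

end SUaux

set_option synthInstance.maxHeartbeats 1000000 in
set_option maxHeartbeats 2000000 in
open SUaux in
theorem sunits_in_recurrence_bounded (d : ℕ) (hd : 2 ≤ d) (α f : Fin d → RatFunc ℂ)
    (hα : ∀ i, α i ≠ 0) (hf : ∀ i, f i ≠ 0)
    (hnd : ∀ i j, i ≠ j → ∀ c : ℂ, α i / α j ≠ RatFunc.C c)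
    (S : Finset (Option ℂ))
    (hS : ∀ i, ∀ v ∉ S, nu v (α i) = 0 ∧ nu v (f i) = 0) :
    ∃ C : ℕ, ∀ n : ℕ,
      ((∑ i, f i * α i ^ n) ≠ 0 ∧ ∀ v ∉ S, nu v (∑ i, f i * α i ^ n) = 0) → n ≤ C := by
  classical
  set β : Fin d → K := fun i => Dr (α i) / α i with hβdef
  have hβinj : Function.Injective β := beta_inj α hα hnd
  have hQ : Qdet β f ≠ 0 := Qdet_ne_zero hβinj hf
  set A : Set ℕ := {n : ℕ | Polynomial.eval ((n : K)) (Qdet β f) = 0} with hA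
  have hAfin : A.Finite := by
    have hsub : A ⊆ (fun n : ℕ => ((n : K))) ⁻¹' ↑(Qdet β f).roots.toFinset := by
      intro n hn
      simp only [Set.mem_preimage, Multiset.mem_toFinset, Finset.mem_coe]
      exact Polynomial.mem_roots'.mpr ⟨hQ, hn⟩
    refine Set.Finite.subset (Set.Finite.preimage ?_ (Qdet β f).roots.toFinset.finite_toSet) hsub
    refine Function.Injective.injOn (fun a b hab => ?_)
    have h1 : am ((a : ℂ[X])) = am ((b : ℂ[X])) := by
      rw [map_natCast, map_natCast]
      exact hab
    have h2 := RatFunc.algebraMap_injective ℂ h1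
    exact_mod_cast h2
  obtain ⟨C₀, hC₀⟩ := hAfin.bddAbove
  set i₀ : Fin d := ⟨0, by omega⟩ with hi₀
  set j₀ : Fin d := ⟨1, by omega⟩ with hj₀
  have hne : i₀ ≠ j₀ := by
    intro hcon
    have := congrArg Fin.val hcon
    simp [hi₀, hj₀] at this
  set B : ℤ := (d : ℤ) * d with hB
  have hB0 : 0 ≤ B := by positivity
  set Cb : ℤ := H (f i₀) + H (f j₀) + 2 * (B * S.card) with hCb
  refine ⟨max C₀ Cb.toNat, fun n hyp => ?_⟩
  obtain ⟨hG0, hGS⟩ := hyp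
  by_cases hnA : n ∈ A
  · exact le_trans (hC₀ hnA) (le_max_left _ _)
  have hnQ : Polynomial.eval ((n : K)) (Qdet β f) ≠ 0 := hnA
  set h : Fin d → K := fun k => f k * α k ^ n with hh
  have hh0 : ∀ k, h k ≠ 0 := fun k => mul_ne_zero (hf k) (pow_ne_zero _ (hα k))
  have hGne : (∑ i, h i) ≠ 0 := hG0
  have hGSnu : ∀ v ∉ S, nu v (∑ i, h i) = 0 := hGS
  set G : K := ∑ i, h i with hG
  set W : Matrix (Fin d) (Fin d) K := Matrix.of (fun m k : Fin d => Dr^[(m : ℕ)] (h k)) with hW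
  have hWdet : W.det = (∏ k, α k ^ n) * Polynomial.eval ((n : K)) (Qdet β f) := by
    have e1 : W = Matrix.of fun m k : Fin d =>
        (α k ^ n) * (Matrix.of fun m' k' : Fin d =>
          Polynomial.eval ((n : K)) (cpoly (β k') (f k') (m' : ℕ))) m k := by
      ext m k
      exact cpoly_eval (hα k) (f k) n (m : ℕ)
    rw [e1, Matrix.det_mul_row]
    congr 1
    rw [Qdet, ← Polynomial.coe_evalRingHom, RingHom.map_det]
    congr 1
  have hWne : W.det ≠ 0 :=
    hWdet ▸ mul_ne_zero (Finset.prod_ne_zero_iff.mpr fun k _ => pow_ne_zero _ (hα k)) hnQ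
  set colv : Fin d → Fin d → K := fun i k => if k = i then G else h k with hcolv
  have hcolv0 : ∀ i k, colv i k ≠ 0 := by
    intro i k
    by_cases hk : k = i <;> simp [hcolv, hk, hGne, hh0 k]
  have hcolvnu : ∀ i k, ∀ v ∉ S, nu v (colv i k) = 0 := by
    intro i k v hv
    by_cases hk : k = i
    · simpa [hcolv, hk] using hGSnu v hv
    · simp only [hcolv, if_neg hk, hh]
      rw [nu_mul v (hf k) (pow_ne_zero _ (hα k)), nu_pow v (hα k) n,
        (hS k v hv).1, (hS k v hv).2]
      ring
  have hwt : ∀ (m : ℕ) (v : Option ℂ), -(m : ℤ) ≤ m • wt v := by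
    intro m v
    rw [nsmul_eq_mul]
    cases v <;> simp [wt] <;> omega
  -- main per-column construction
  have main : ∀ i : Fin d, ∃ M : K, M ≠ 0 ∧ H M ≤ B * S.card ∧
      (∏ k, colv i k) * M = W.det := by
    intro i
    set Mi : Matrix (Fin d) (Fin d) K :=
      Matrix.of (fun m k : Fin d => Dr^[(m : ℕ)] (colv i k) / colv i k) with hMi
    have hWi : (W.updateCol i fun m => Dr^[(m : ℕ)] G).det = W.det := by
      have hcol : (fun m : Fin d => Dr^[(m : ℕ)] G)
          = fun m => ∑ k, (fun _ : Fin d => (1 : K)) k • W m k := by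
        funext m
        rw [hG, Dr_iter_sum]
        refine Finset.sum_congr rfl fun k _ => ?_
        rw [one_smul]
        rfl
      rw [hcol, Matrix.det_updateCol_sum W i (fun _ => (1 : K)), one_smul]
    have hfactor : (W.updateCol i fun m => Dr^[(m : ℕ)] G)
        = Matrix.of fun m k => colv i k * Mi m k := by
      ext m k
      by_cases hk : k = i
      · rw [hk, Matrix.updateCol_self]
        simp only [Matrix.of_apply, hMi]
        rw [mul_comm, div_mul_cancel₀ _ (hcolv0 i i)]
        simp [hcolv]
      · rw [Matrix.updateCol_ne hk]
        simp only [Matrix.of_apply, hMi, hW]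
        rw [mul_comm, div_mul_cancel₀ _ (hcolv0 i k)]
        simp [hcolv, hk]
    have hdeteq : (∏ k, colv i k) * Mi.det = W.det := by
      rw [← hWi, hfactor]
      exact (Matrix.det_mul_row _ _).symm
    have hMne : Mi.det ≠ 0 := by
      intro h0
      rw [h0, mul_zero] at hdeteq
      exact hWne hdeteq.symm
    -- entry bounds
    have hb1 : ∀ (v : Option ℂ) (m k : Fin d), Mi m k = 0 ∨ -(d : ℤ) ≤ nu v (Mi m k) := by
      intro v m k
      by_cases hz : Dr^[(m : ℕ)] (colv i k) = 0
      · left; simp [hMi, hz]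
      right
      rcases nu_iter_lb (m : ℕ) v (hcolv0 i k) with hz' | hlb
      · exact absurd hz' hz
      have hent : nu v (Mi m k) = nu v (Dr^[(m : ℕ)] (colv i k)) - nu v (colv i k) := by
        simp only [hMi, Matrix.of_apply]
        rw [div_eq_mul_inv, nu_mul v hz (inv_ne_zero (hcolv0 i k)), nu_inv]
        ring
      have hm : ((m : ℕ) : ℤ) < d := by exact_mod_cast m.isLt
      have := hwt (m : ℕ) v
      omega
    have hb2 : ∀ v ∉ S, ∀ (m k : Fin d), Mi m k = 0 ∨ 0 ≤ nu v (Mi m k) := by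
      intro v hv m k
      by_cases hz : Dr^[(m : ℕ)] (colv i k) = 0
      · left; simp [hMi, hz]
      right
      rcases nu_iter_nonneg (m : ℕ) v (hcolv0 i k) (le_of_eq (hcolvnu i k v hv).symm)
        with hz' | hlb
      · exact absurd hz' hz
      have hent : nu v (Mi m k) = nu v (Dr^[(m : ℕ)] (colv i k)) - nu v (colv i k) := by
        simp only [hMi, Matrix.of_apply]
        rw [div_eq_mul_inv, nu_mul v hz (inv_ne_zero (hcolv0 i k)), nu_inv]
        ring
      rw [hent, hcolvnu i k v hv]
      omega
    -- determinant bounds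
    have hsgn : ∀ (σ : Equiv.Perm (Fin d)) (x : K), x ≠ 0 →
        ∀ v, nu v (Equiv.Perm.sign σ • x) = nu v x := by
      intro σ x hx v
      rcases Int.units_eq_one_or (Equiv.Perm.sign σ) with hs | hs
      · rw [hs, one_smul]
      · rw [hs, Units.neg_smul, one_smul, nu_neg]
    have hdet : ∀ (v : Option ℂ) (bb : ℤ), bb ≤ 0 →
        (∀ (m k : Fin d), Mi m k = 0 ∨ bb ≤ nu v (Mi m k)) →
        Mi.det = 0 ∨ (d : ℤ) * bb ≤ nu v Mi.det := by
      intro v bb hbb hent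
      rw [Matrix.det_apply]
      apply nu_sum_lb v Finset.univ _ ((d : ℤ) * bb)
      intro σ _
      rcases nu_prod_lb v Finset.univ (fun k => Mi (σ k) k) (fun _ => bb)
        (fun k _ => hent (σ k) k) with hz | hp
      · left; rw [hz, smul_zero]
      by_cases hP : (∏ k, Mi (σ k) k) = 0
      · left; rw [hP, smul_zero]
      right
      have hsum : ∑ _k : Fin d, bb = (d : ℤ) * bb := by
        rw [Finset.sum_const, Finset.card_univ, Fintype.card_fin, nsmul_eq_mul]
      rw [hsum] at hp
      rw [hsgn σ _ hP v]
      exact hp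
    have hHM : H Mi.det ≤ B * S.card := by
      apply H_le_of_bounds S B hB0
      · intro v hv
        rcases hdet v 0 le_rfl (hb2 v hv) with h0 | h0
        · exact absurd h0 hMne
        · simpa using h0
      · intro v
        rcases hdet v (-(d : ℤ)) (by omega) (hb1 v) with h0 | h0
        · exact absurd h0 hMne
        · rw [hB]
          have : (d : ℤ) * -(d : ℤ) = -((d : ℤ) * d) := by ring
          rw [this] at h0
          exact h0
    exact ⟨Mi.det, hMne, hHM, hdeteq⟩
  obtain ⟨M0, hM0ne, hM0H, hM0eq⟩ := main i₀
  obtain ⟨M1, hM1ne, hM1H, hM1eq⟩ := main j₀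
  have heq : (∏ k, colv i₀ k) * M0 = (∏ k, colv j₀ k) * M1 := by rw [hM0eq, hM1eq]
  have hprodcolv : ∀ i : Fin d, (∏ k, colv i k) * h i = G * ∏ k, h k := by
    intro i
    have h1 : ∏ k, colv i k = G * ∏ k ∈ Finset.univ.erase i, h k := by
      rw [← Finset.mul_prod_erase Finset.univ (colv i) (Finset.mem_univ i)]
      congr 1
      · simp [hcolv]
      · exact Finset.prod_congr rfl fun k hk => by
          simp [hcolv, (Finset.mem_erase.mp hk).1]
    rw [h1, ← Finset.mul_prod_erase Finset.univ h (Finset.mem_univ i)]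
    ring
  have hprodh : (∏ k, h k) ≠ 0 := Finset.prod_ne_zero_iff.mpr fun k _ => hh0 k
  have htarget : h j₀ * M0 = h i₀ * M1 := by
    have hGP : G * ∏ k, h k ≠ 0 := mul_ne_zero hGne hprodh
    apply mul_right_cancel₀ hGP
    calc h j₀ * M0 * (G * ∏ k, h k) = ((∏ k, colv i₀ k) * M0) * (h i₀ * h j₀) := by
          rw [← hprodcolv i₀]; ring
      _ = ((∏ k, colv j₀ k) * M1) * (h i₀ * h j₀) := by rw [heq]
      _ = h i₀ * M1 * (G * ∏ k, h k) := by rw [← hprodcolv j₀]; ring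
  have hM1fne : f i₀ * M1 ≠ 0 := mul_ne_zero (hf i₀) hM1ne
  have hpowrel : (α i₀ / α j₀) ^ n = (f j₀ * M0) / (f i₀ * M1) := by
    rw [div_pow, div_eq_div_iff (pow_ne_zero n (hα j₀)) hM1fne]
    have ht' : f j₀ * α j₀ ^ n * M0 = f i₀ * α i₀ ^ n * M1 := by
      simpa [hh] using htarget
    linear_combination -ht'
  have hαq0 : α i₀ / α j₀ ≠ 0 := div_ne_zero (hα i₀) (hα j₀)
  have hH1 : 1 ≤ H (α i₀ / α j₀) := H_pos_of_nonconst hαq0 (hnd i₀ j₀ hne)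
  have hnle : (n : ℤ) ≤ H ((α i₀ / α j₀) ^ n) := by
    rw [H_pow hαq0 n]
    calc (n : ℤ) = n * 1 := by ring
      _ ≤ n * H (α i₀ / α j₀) := by
          apply mul_le_mul_of_nonneg_left hH1 (by positivity)
  have hHub : H ((f j₀ * M0) / (f i₀ * M1)) ≤ Cb := by
    rw [div_eq_mul_inv]
    calc H ((f j₀ * M0) * (f i₀ * M1)⁻¹)
        ≤ H (f j₀ * M0) + H ((f i₀ * M1)⁻¹) :=
          H_mul_le (mul_ne_zero (hf j₀) hM0ne) (inv_ne_zero hM1fne)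
      _ = H (f j₀ * M0) + H (f i₀ * M1) := by rw [H_inv hM1fne]
      _ ≤ (H (f j₀) + H M0) + (H (f i₀) + H M1) :=
          add_le_add (H_mul_le (hf j₀) hM0ne) (H_mul_le (hf i₀) hM1ne)
      _ ≤ Cb := by
          rw [hCb]
          have := hM0H
          have := hM1H
          omega
  have hfin : (n : ℤ) ≤ Cb := by
    rw [hpowrel] at hnle
    exact le_trans hnle hHub
  have : n ≤ Cb.toNat := by omega
  omega
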